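/- arXiv:1811.04625 — 11 statements merged into one kernel-verified Lean document; each statement's English description precedes it below -/
import Mathlib

section
/- Let n, t ≥ 1, let F₁, …, F_t be t mutually orthogonal Latin squares of order n indexed by [n] = {0, 1, …, n−1}, and let L be a Latin square of order n indexed by [n]. Define, on the index set [n] × [n], the arrays 𝒳_k((p,r),(q,c)) = (F_k(F₁(p,r), q), F_k(F₁(p,q), c)) for 1 ≤ k ≤ t, and ℬ((p,r),(q,c)) = (F₁(p,q), L(F₁(p,r), c)). Then ℬ together with 𝒳₁, …, 𝒳_t form a set of t+1 mutually orthogonal Latin squares of order n². -/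
/-- A Latin square on an index/symbol set `α`: every row and every column is a bijection. -/
def IsLatinSquare {α : Type*} (L : α → α → α) : Prop :=
  (∀ r, Function.Bijective (fun c => L r c)) ∧
  (∀ c, Function.Bijective (fun r => L r c))

/-- Two Latin squares (as arrays) are orthogonal if superimposing them gives a bijection. -/
def IsOrthogonal {α : Type*} (L₁ L₂ : α → α → α) : Prop :=
  Function.Bijective (fun rc : α × α => (L₁ rc.1 rc.2, L₂ rc.1 rc.2))

/-- Theorem 4 of the paper: `ℬ` together with `𝒳₁, …, 𝒳_t` form `t+1` MOLS of order `n²`. -/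
theorem stmt_0 (n t : ℕ) (hn : 1 ≤ n) (ht : 1 ≤ t)
    (F : Fin t → Fin n → Fin n → Fin n)
    (hF : ∀ k, IsLatinSquare (F k))
    (hForth : ∀ k l, k ≠ l → IsOrthogonal (F k) (F l))
    (L : Fin n → Fin n → Fin n) (hL : IsLatinSquare L)
    (X : Fin t → (Fin n × Fin n) → (Fin n × Fin n) → (Fin n × Fin n))
    (hX : ∀ k pr qc, X k pr qc =
      (F k (F ⟨0, ht⟩ pr.1 pr.2) qc.1, F k (F ⟨0, ht⟩ pr.1 qc.1) qc.2))
    (B : (Fin n × Fin n) → (Fin n × Fin n) → (Fin n × Fin n))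
    (hB : ∀ pr qc, B pr qc = (F ⟨0, ht⟩ pr.1 qc.1, L (F ⟨0, ht⟩ pr.1 pr.2) qc.2)) :
    IsLatinSquare B ∧ (∀ k, IsLatinSquare (X k)) ∧
    (∀ k l, k ≠ l → IsOrthogonal (X k) (X l)) ∧
    (∀ k, IsOrthogonal (X k) B) := by
  have hrow : ∀ (k : Fin t) (a b c : Fin n), F k a b = F k a c → b = c :=
    fun k a b c h => ((hF k).1 a).injective h
  have hcol : ∀ (k : Fin t) (c a b : Fin n), F k a c = F k b c → a = b :=
    fun k c a b h => ((hF k).2 c).injective h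
  have hLrow : ∀ (a b c : Fin n), L a b = L a c → b = c :=
    fun a b c h => (hL.1 a).injective h
  have hLcol : ∀ (c a b : Fin n), L a c = L b c → a = b :=
    fun c a b h => (hL.2 c).injective h
  refine ⟨⟨?_, ?_⟩, fun k => ⟨?_, ?_⟩, ?_, ?_⟩
  · rintro ⟨p, r⟩
    rw [← Finite.injective_iff_bijective]
    rintro ⟨q, c⟩ ⟨q', c'⟩ h
    simp only [hB, Prod.mk.injEq] at h
    obtain ⟨h1, h2⟩ := h
    have hq := hrow _ _ _ _ h1
    have hc := hLrow _ _ _ h2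
    simp [hq, hc]
  · rintro ⟨q, c⟩
    rw [← Finite.injective_iff_bijective]
    rintro ⟨p, r⟩ ⟨p', r'⟩ h
    simp only [hB, Prod.mk.injEq] at h
    obtain ⟨h1, h2⟩ := h
    have hp := hcol _ _ _ _ h1
    subst hp
    have hr := hrow _ _ _ _ (hLcol _ _ _ h2)
    simp [hr]
  · rintro ⟨p, r⟩
    rw [← Finite.injective_iff_bijective]
    rintro ⟨q, c⟩ ⟨q', c'⟩ h
    simp only [hX, Prod.mk.injEq] at h
    obtain ⟨h1, h2⟩ := h
    have hq := hrow _ _ _ _ h1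
    subst hq
    have hc := hrow _ _ _ _ h2
    simp [hc]
  · rintro ⟨q, c⟩
    rw [← Finite.injective_iff_bijective]
    rintro ⟨p, r⟩ ⟨p', r'⟩ h
    simp only [hX, Prod.mk.injEq] at h
    obtain ⟨h1, h2⟩ := h
    have hp := hcol _ _ _ _ (hcol _ _ _ _ h2)
    subst hp
    have hr := hrow _ _ _ _ (hcol _ _ _ _ h1)
    simp [hr]
  · intro k l hkl
    rw [IsOrthogonal, ← Finite.injective_iff_bijective]
    rintro ⟨⟨p, r⟩, ⟨q, c⟩⟩ ⟨⟨p', r'⟩, ⟨q', c'⟩⟩ h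
    simp only [hX, Prod.mk.injEq] at h
    obtain ⟨⟨h1, h2⟩, h3, h4⟩ := h
    have haq : ((F ⟨0,ht⟩ p r, q) : Fin n × Fin n) = (F ⟨0,ht⟩ p' r', q') := by
      apply (hForth k l hkl).injective
      simp only [Prod.mk.injEq]
      exact ⟨h1, h3⟩
    have hbc : ((F ⟨0,ht⟩ p q, c) : Fin n × Fin n) = (F ⟨0,ht⟩ p' q', c') := by
      apply (hForth k l hkl).injective
      simp only [Prod.mk.injEq]
      exact ⟨h2, h4⟩
    simp only [Prod.mk.injEq] at haq hbc
    obtain ⟨ha, hq⟩ := haq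
    obtain ⟨hb, hc⟩ := hbc
    subst hq
    have hp := hcol _ _ _ _ hb
    subst hp
    have hr := hrow _ _ _ _ ha
    simp [hr, hc]
  · intro k
    rw [IsOrthogonal, ← Finite.injective_iff_bijective]
    rintro ⟨⟨p, r⟩, ⟨q, c⟩⟩ ⟨⟨p', r'⟩, ⟨q', c'⟩⟩ h
    simp only [hX, hB, Prod.mk.injEq] at h
    obtain ⟨⟨h1, h2⟩, h3, h4⟩ := h
    -- h3 : F 0 p q = F 0 p' q'
    have hc : c = c' := hrow _ _ _ _ (h3 ▸ h2)
    subst hc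
    have ha : F ⟨0,ht⟩ p r = F ⟨0,ht⟩ p' r' := hLcol _ _ _ h4
    have hq : q = q' := hrow _ _ _ _ (ha ▸ h1)
    subst hq
    have hp : p = p' := hcol _ _ _ _ h3
    subst hp
    have hr : r = r' := hrow _ _ _ _ ha
    simp [hr]
end

section
/- Let n, t ≥ 1, let F₁, …, F_t be t mutually orthogonal Latin squares of order n indexed by [n] = {0, 1, …, n−1}, and let L be a Latin square of order n indexed by [n]. Then the array ℬ defined on the index set [n] × [n] by ℬ((p,r),(q,c)) = (F₁(p,q), L(F₁(p,r), c)) is a Latin square of order n². -/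
/-- The array `ℬ((p,r),(q,c)) = (F₁(p,q), L(F₁(p,r),c))` is a Latin square of order `n²`. -/
theorem stmt_1 (n t : ℕ) (hn : 1 ≤ n) (ht : 1 ≤ t)
    (F : Fin t → Fin n → Fin n → Fin n)
    (hF : ∀ k, IsLatinSquare (F k))
    (hForth : ∀ k l, k ≠ l → IsOrthogonal (F k) (F l))
    (L : Fin n → Fin n → Fin n) (hL : IsLatinSquare L)
    (B : (Fin n × Fin n) → (Fin n × Fin n) → (Fin n × Fin n))
    (hB : ∀ pr qc, B pr qc = (F ⟨0, ht⟩ pr.1 qc.1, L (F ⟨0, ht⟩ pr.1 pr.2) qc.2)) :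
    IsLatinSquare B := by
  set F₀ := F ⟨0, ht⟩ with hF₀
  obtain ⟨hFr, hFc⟩ := hF ⟨0, ht⟩
  obtain ⟨hLr, hLc⟩ := hL
  constructor
  · intro pr
    rw [← Finite.injective_iff_bijective]
    intro ⟨q, c⟩ ⟨q', c'⟩ h
    simp only [hB] at h
    obtain ⟨h1, h2⟩ := Prod.mk.injEq .. ▸ h
    have hq : q = q' := (hFr pr.1).1 h1
    have hc : c = c' := (hLr (F₀ pr.1 pr.2)).1 h2
    simp [hq, hc]
  · intro qc
    rw [← Finite.injective_iff_bijective]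
    intro ⟨p, r⟩ ⟨p', r'⟩ h
    simp only [hB] at h
    obtain ⟨h1, h2⟩ := Prod.mk.injEq .. ▸ h
    have hp : p = p' := (hFc qc.1).1 h1
    subst hp
    have hr : F₀ p r = F₀ p r' := (hLc qc.2).1 h2
    have : r = r' := (hFr p).1 hr
    simp [this]
end

section
/- Let n, t ≥ 1 and let F₁, …, F_t be t mutually orthogonal Latin squares of order n indexed by [n] = {0, 1, …, n−1}. Then for each k with 1 ≤ k ≤ t, the array 𝒳_k defined on the index set [n] × [n] by 𝒳_k((p,r),(q,c)) = (F_k(F₁(p,r), q), F_k(F₁(p,q), c)) is a Latin square of order n². -/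
/-- Each array `𝒳_k((p,r),(q,c)) = (F_k(F₁(p,r),q), F_k(F₁(p,q),c))` is a Latin square
of order `n²`. -/
theorem stmt_2 (n t : ℕ) (hn : 1 ≤ n) (ht : 1 ≤ t)
    (F : Fin t → Fin n → Fin n → Fin n)
    (hF : ∀ k, IsLatinSquare (F k))
    (hForth : ∀ k l, k ≠ l → IsOrthogonal (F k) (F l))
    (X : Fin t → (Fin n × Fin n) → (Fin n × Fin n) → (Fin n × Fin n))
    (hX : ∀ k pr qc, X k pr qc =
      (F k (F ⟨0, ht⟩ pr.1 pr.2) qc.1, F k (F ⟨0, ht⟩ pr.1 qc.1) qc.2)) :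
    ∀ k, IsLatinSquare (X k) := by
  intro k
  obtain ⟨hkr, hkc⟩ := hF k
  obtain ⟨h1r, h1c⟩ := hF ⟨0, ht⟩
  constructor
  · intro pr
    rw [← Finite.injective_iff_bijective]
    intro qc qc' h
    simp only [hX, Prod.mk.injEq] at h
    obtain ⟨h1, h2⟩ := h
    have hq : qc.1 = qc'.1 := (hkr (F ⟨0, ht⟩ pr.1 pr.2)).1 h1
    rw [hq] at h2
    have hc : qc.2 = qc'.2 := (hkr (F ⟨0, ht⟩ pr.1 qc'.1)).1 h2
    exact Prod.ext hq hc
  · intro qc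
    rw [← Finite.injective_iff_bijective]
    intro pr pr' h
    simp only [hX, Prod.mk.injEq] at h
    obtain ⟨h1, h2⟩ := h
    have hp : pr.1 = pr'.1 := (h1c qc.1).1 ((hkc qc.2).1 h2)
    rw [hp] at h1
    have hr : pr.2 = pr'.2 := (h1r pr'.1).1 ((hkc qc.1).1 h1)
    exact Prod.ext hp hr
end

section
/- Let n, t ≥ 1 and let F₁, …, F_t be t mutually orthogonal Latin squares of order n indexed by [n] = {0, 1, …, n−1}. For 1 ≤ k ≤ t define the array 𝒳_k on the index set [n] × [n] by 𝒳_k((p,r),(q,c)) = (F_k(F₁(p,r), q), F_k(F₁(p,q), c)). Then for all k ≠ ℓ with 1 ≤ k, ℓ ≤ t, the Latin squares 𝒳_k and 𝒳_ℓ of order n² are orthogonal. -/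
/-- For `k ≠ ℓ`, the Latin squares `𝒳_k` and `𝒳_ℓ` of order `n²` are orthogonal. -/
theorem stmt_3 (n t : ℕ) (hn : 1 ≤ n) (ht : 1 ≤ t)
    (F : Fin t → Fin n → Fin n → Fin n)
    (hF : ∀ k, IsLatinSquare (F k))
    (hForth : ∀ k l, k ≠ l → IsOrthogonal (F k) (F l))
    (X : Fin t → (Fin n × Fin n) → (Fin n × Fin n) → (Fin n × Fin n))
    (hX : ∀ k pr qc, X k pr qc =
      (F k (F ⟨0, ht⟩ pr.1 pr.2) qc.1, F k (F ⟨0, ht⟩ pr.1 qc.1) qc.2)) :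
    ∀ k l, k ≠ l → IsOrthogonal (X k) (X l) := by
  intro k l hkl
  unfold IsOrthogonal
  rw [← Finite.injective_iff_bijective]
  rintro ⟨⟨p, r⟩, ⟨q, c⟩⟩ ⟨⟨p', r'⟩, ⟨q', c'⟩⟩ h
  simp only [hX, Prod.mk.injEq] at h
  obtain ⟨⟨h1, h2⟩, h3, h4⟩ := h
  have horth := hForth k l hkl
  have e1 : ((F ⟨0, ht⟩ p r, q) : Fin n × Fin n) = (F ⟨0, ht⟩ p' r', q') :=
    horth.injective (by simp [h1, h3])
  have e2 : ((F ⟨0, ht⟩ p q, c) : Fin n × Fin n) = (F ⟨0, ht⟩ p' q', c') :=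
    horth.injective (by simp [h2, h4])
  rw [Prod.mk.injEq] at e1 e2
  obtain ⟨ea, rfl⟩ := e1
  obtain ⟨eb, rfl⟩ := e2
  have hp : p = p' := (hF ⟨0, ht⟩).2 q |>.injective eb
  subst hp
  have hr : r = r' := (hF ⟨0, ht⟩).1 p |>.injective ea
  subst hr
  rfl
end

section
/- Let n, t ≥ 1, let F₁, …, F_t be t mutually orthogonal Latin squares of order n indexed by [n] = {0, 1, …, n−1}, and let L be a Latin square of order n indexed by [n]. Define on the index set [n] × [n] the arrays 𝒳_k((p,r),(q,c)) = (F_k(F₁(p,r), q), F_k(F₁(p,q), c)) for 1 ≤ k ≤ t and ℬ((p,r),(q,c)) = (F₁(p,q), L(F₁(p,r), c)). Then for each k with 1 ≤ k ≤ t, the Latin squares 𝒳_k and ℬ of order n² are orthogonal. -/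
/-- For each `k`, the Latin squares `𝒳_k` and `ℬ` of order `n²` are orthogonal. -/
theorem stmt_4 (n t : ℕ) (hn : 1 ≤ n) (ht : 1 ≤ t)
    (F : Fin t → Fin n → Fin n → Fin n)
    (hF : ∀ k, IsLatinSquare (F k))
    (hForth : ∀ k l, k ≠ l → IsOrthogonal (F k) (F l))
    (L : Fin n → Fin n → Fin n) (hL : IsLatinSquare L)
    (X : Fin t → (Fin n × Fin n) → (Fin n × Fin n) → (Fin n × Fin n))
    (hX : ∀ k pr qc, X k pr qc =
      (F k (F ⟨0, ht⟩ pr.1 pr.2) qc.1, F k (F ⟨0, ht⟩ pr.1 qc.1) qc.2))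
    (B : (Fin n × Fin n) → (Fin n × Fin n) → (Fin n × Fin n))
    (hB : ∀ pr qc, B pr qc = (F ⟨0, ht⟩ pr.1 qc.1, L (F ⟨0, ht⟩ pr.1 pr.2) qc.2)) :
    ∀ k, IsOrthogonal (X k) B := by
  intro k
  unfold IsOrthogonal
  rw [← Finite.injective_iff_bijective]
  rintro ⟨⟨p, r⟩, q, c⟩ ⟨⟨p', r'⟩, q', c'⟩ h
  simp only [hX, hB, Prod.mk.injEq] at h
  obtain ⟨⟨h1, h2⟩, h3, h4⟩ := h
  rw [h3] at h2
  have hc : c = c' := ((hF k).1 _).injective h2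
  rw [hc] at h4
  have ha : F ⟨0, ht⟩ p r = F ⟨0, ht⟩ p' r' := (hL.2 c').injective h4
  rw [ha] at h1
  have hq : q = q' := ((hF k).1 _).injective h1
  rw [hq] at h3
  have hp : p = p' := ((hF ⟨0, ht⟩).2 q').injective h3
  rw [hp] at ha
  have hr : r = r' := ((hF ⟨0, ht⟩).1 p').injective ha
  simp [hp, hr, hq, hc]
end

section
/- Let n, t ≥ 1. Let A₁, A₂ be a pair of orthogonal Latin squares of order n, let B₁, B₂ be a pair of orthogonal Latin squares of order n, let C₀, …, C_{t−1} be t mutually orthogonal Latin squares of order n, all indexed by [n] = {0, 1, …, n−1}, and let f : [t] → [t] be a bijection. Define, on the index set [n] × [n], the arrays ℬ₁((p,r),(q,c)) = (A₁(p,q), B₁(r,c)), ℬ₂((p,r),(q,c)) = (A₂(p,q), B₂(r,c)), and 𝒳_{i,f(i)}((p,r),(q,c)) = (C_i(p, B₁(r,c)), C_{f(i)}(q, B₂(r,c))) for i ∈ [t]. Then ℬ₁, ℬ₂ together with the 𝒳_{i,f(i)}, i ∈ [t], form a set of t+2 mutually orthogonal Latin squares of order n². -/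
/-- Theorem 9 of the paper: `ℬ₁`, `ℬ₂` together with the `𝒳_{i,f(i)}`, `i ∈ [t]`,
form a set of `t+2` MOLS of order `n²`. -/
theorem stmt_8 (n t : ℕ) (hn : 1 ≤ n) (ht : 1 ≤ t)
    (A₁ A₂ B₁ B₂ : Fin n → Fin n → Fin n)
    (hA₁ : IsLatinSquare A₁) (hA₂ : IsLatinSquare A₂) (hA : IsOrthogonal A₁ A₂)
    (hB₁ : IsLatinSquare B₁) (hB₂ : IsLatinSquare B₂) (hB : IsOrthogonal B₁ B₂)
    (C : Fin t → Fin n → Fin n → Fin n)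
    (hC : ∀ i, IsLatinSquare (C i))
    (hCorth : ∀ i j, i ≠ j → IsOrthogonal (C i) (C j))
    (f : Fin t → Fin t) (hf : Function.Bijective f)
    (calB₁ calB₂ : (Fin n × Fin n) → (Fin n × Fin n) → (Fin n × Fin n))
    (hcalB₁ : ∀ pr qc, calB₁ pr qc = (A₁ pr.1 qc.1, B₁ pr.2 qc.2))
    (hcalB₂ : ∀ pr qc, calB₂ pr qc = (A₂ pr.1 qc.1, B₂ pr.2 qc.2))
    (X : Fin t → (Fin n × Fin n) → (Fin n × Fin n) → (Fin n × Fin n))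
    (hX : ∀ i pr qc, X i pr qc =
      (C i pr.1 (B₁ pr.2 qc.2), C (f i) qc.1 (B₂ pr.2 qc.2))) :
    IsLatinSquare calB₁ ∧ IsLatinSquare calB₂ ∧ (∀ i, IsLatinSquare (X i)) ∧
    IsOrthogonal calB₁ calB₂ ∧
    (∀ i j, i ≠ j → IsOrthogonal (X i) (X j)) ∧
    (∀ i, IsOrthogonal calB₁ (X i)) ∧
    (∀ i, IsOrthogonal calB₂ (X i)) := by
  refine ⟨?_, ?_, ?_, ?_, ?_, ?_, ?_⟩
  · constructor
    · intro pr
      apply Finite.injective_iff_bijective.mp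
      rintro ⟨q, c⟩ ⟨q', c'⟩ h
      simp only [hcalB₁, Prod.mk.injEq] at h
      exact Prod.ext_iff.mpr ⟨(hA₁.1 pr.1).injective h.1, (hB₁.1 pr.2).injective h.2⟩
    · intro qc
      apply Finite.injective_iff_bijective.mp
      rintro ⟨p, r⟩ ⟨p', r'⟩ h
      simp only [hcalB₁, Prod.mk.injEq] at h
      exact Prod.ext_iff.mpr ⟨(hA₁.2 qc.1).injective h.1, (hB₁.2 qc.2).injective h.2⟩
  · constructor
    · intro pr
      apply Finite.injective_iff_bijective.mp
      rintro ⟨q, c⟩ ⟨q', c'⟩ h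
      simp only [hcalB₂, Prod.mk.injEq] at h
      exact Prod.ext_iff.mpr ⟨(hA₂.1 pr.1).injective h.1, (hB₂.1 pr.2).injective h.2⟩
    · intro qc
      apply Finite.injective_iff_bijective.mp
      rintro ⟨p, r⟩ ⟨p', r'⟩ h
      simp only [hcalB₂, Prod.mk.injEq] at h
      exact Prod.ext_iff.mpr ⟨(hA₂.2 qc.1).injective h.1, (hB₂.2 qc.2).injective h.2⟩
  · intro i
    constructor
    · intro pr
      apply Finite.injective_iff_bijective.mp
      rintro ⟨q, c⟩ ⟨q', c'⟩ h
      simp only [hX, Prod.mk.injEq] at h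
      have hc : c = c' := (hB₁.1 pr.2).injective (((hC i).1 pr.1).injective h.1)
      subst hc
      have hq : q = q' := ((hC (f i)).2 _).injective h.2
      simp [hq]
    · intro qc
      apply Finite.injective_iff_bijective.mp
      rintro ⟨p, r⟩ ⟨p', r'⟩ h
      simp only [hX, Prod.mk.injEq] at h
      have hr : r = r' := (hB₂.2 qc.2).injective (((hC (f i)).1 qc.1).injective h.2)
      subst hr
      have hp : p = p' := ((hC i).2 _).injective h.1
      simp [hp]
  · apply Finite.injective_iff_bijective.mp
    rintro ⟨⟨p, r⟩, ⟨q, c⟩⟩ ⟨⟨p', r'⟩, ⟨q', c'⟩⟩ h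
    simp only [hcalB₁, hcalB₂, Prod.mk.injEq] at h
    have h1 : ((p, q) : Fin n × Fin n) = (p', q') :=
      hA.injective (Prod.ext_iff.mpr ⟨h.1.1, h.2.1⟩)
    have h2 : ((r, c) : Fin n × Fin n) = (r', c') :=
      hB.injective (Prod.ext_iff.mpr ⟨h.1.2, h.2.2⟩)
    simp only [Prod.mk.injEq] at h1 h2
    simp [h1.1, h1.2, h2.1, h2.2]
  · intro i j hij
    apply Finite.injective_iff_bijective.mp
    rintro ⟨⟨p, r⟩, ⟨q, c⟩⟩ ⟨⟨p', r'⟩, ⟨q', c'⟩⟩ h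
    simp only [hX, Prod.mk.injEq] at h
    have h1 : ((p, B₁ r c) : Fin n × Fin n) = (p', B₁ r' c') :=
      (hCorth i j hij).injective (Prod.ext_iff.mpr ⟨h.1.1, h.2.1⟩)
    have h2 : ((q, B₂ r c) : Fin n × Fin n) = (q', B₂ r' c') :=
      (hCorth (f i) (f j) (fun e => hij (hf.injective e))).injective
        (Prod.ext_iff.mpr ⟨h.1.2, h.2.2⟩)
    simp only [Prod.mk.injEq] at h1 h2
    have h3 : ((r, c) : Fin n × Fin n) = (r', c') :=
      hB.injective (Prod.ext_iff.mpr ⟨h1.2, h2.2⟩)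
    simp only [Prod.mk.injEq] at h3
    simp [h1.1, h2.1, h3.1, h3.2]
  · intro i
    apply Finite.injective_iff_bijective.mp
    rintro ⟨⟨p, r⟩, ⟨q, c⟩⟩ ⟨⟨p', r'⟩, ⟨q', c'⟩⟩ h
    simp only [hcalB₁, hX, Prod.mk.injEq] at h
    have e := h.2.1
    rw [h.1.2] at e
    have hp : p = p' := ((hC i).2 _).injective e
    subst hp
    have hq : q = q' := (hA₁.1 p).injective h.1.1
    subst hq
    have hB2 : B₂ r c = B₂ r' c' := ((hC (f i)).1 q).injective h.2.2
    have h3 : ((r, c) : Fin n × Fin n) = (r', c') :=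
      hB.injective (Prod.ext_iff.mpr ⟨h.1.2, hB2⟩)
    simp only [Prod.mk.injEq] at h3
    simp [h3.1, h3.2]
  · intro i
    apply Finite.injective_iff_bijective.mp
    rintro ⟨⟨p, r⟩, ⟨q, c⟩⟩ ⟨⟨p', r'⟩, ⟨q', c'⟩⟩ h
    simp only [hcalB₂, hX, Prod.mk.injEq] at h
    have e := h.2.2
    rw [h.1.2] at e
    have hq : q = q' := ((hC (f i)).2 _).injective e
    subst hq
    have hp : p = p' := (hA₂.2 q).injective h.1.1
    subst hp
    have hB1 : B₁ r c = B₁ r' c' := ((hC i).1 p).injective h.2.1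
    have h3 : ((r, c) : Fin n × Fin n) = (r', c') :=
      hB.injective (Prod.ext_iff.mpr ⟨hB1, h.1.2⟩)
    simp only [Prod.mk.injEq] at h3
    simp [h3.1, h3.2]
end

section
/- Let n ≥ 1, let B₁, B₂ be a pair of orthogonal Latin squares of order n indexed by [n] = {0, 1, …, n−1}, and let C_α, C_β be Latin squares of order n indexed by [n]. Then the array 𝒳_{α,β} defined on the index set [n] × [n] by 𝒳_{α,β}((p,r),(q,c)) = (C_α(p, B₁(r,c)), C_β(q, B₂(r,c))) is a Latin square of order n². -/
/-- The array `𝒳_{α,β}((p,r),(q,c)) = (C_α(p,B₁(r,c)), C_β(q,B₂(r,c)))` is a Latin square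
of order `n²`. -/
theorem stmt_9 (n : ℕ) (hn : 1 ≤ n)
    (B₁ B₂ : Fin n → Fin n → Fin n)
    (hB₁ : IsLatinSquare B₁) (hB₂ : IsLatinSquare B₂) (hB : IsOrthogonal B₁ B₂)
    (Cα Cβ : Fin n → Fin n → Fin n)
    (hCα : IsLatinSquare Cα) (hCβ : IsLatinSquare Cβ)
    (X : (Fin n × Fin n) → (Fin n × Fin n) → (Fin n × Fin n))
    (hX : ∀ pr qc, X pr qc =
      (Cα pr.1 (B₁ pr.2 qc.2), Cβ qc.1 (B₂ pr.2 qc.2))) :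
    IsLatinSquare X := by
  constructor
  · rintro ⟨p, r⟩
    rw [← Finite.injective_iff_bijective]
    rintro ⟨q, c⟩ ⟨q', c'⟩ h
    simp only [hX] at h
    obtain ⟨h1, h2⟩ := Prod.mk.injEq .. ▸ h
    have hc : c = c' := (hB₁.1 r).1 ((hCα.1 p).1 h1)
    subst hc
    have hq : q = q' := (hCβ.2 (B₂ r c)).1 h2
    simp [hq]
  · rintro ⟨q, c⟩
    rw [← Finite.injective_iff_bijective]
    rintro ⟨p, r⟩ ⟨p', r'⟩ h
    simp only [hX] at h
    obtain ⟨h1, h2⟩ := Prod.mk.injEq .. ▸ h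
    have hr : r = r' := (hB₂.2 c).1 ((hCβ.1 q).1 h2)
    subst hr
    have hp : p = p' := (hCα.2 (B₁ r c)).1 h1
    simp [hp]
end

section
/- Let n ≥ 1, let B₁, B₂ be a pair of orthogonal Latin squares of order n indexed by [n] = {0, 1, …, n−1}, and let C_α, C_β, C_γ, C_δ be Latin squares of order n indexed by [n] such that C_α is orthogonal to C_γ and C_β is orthogonal to C_δ. Define the arrays 𝒳_{α,β}((p,r),(q,c)) = (C_α(p, B₁(r,c)), C_β(q, B₂(r,c))) and 𝒳_{γ,δ}((p,r),(q,c)) = (C_γ(p, B₁(r,c)), C_δ(q, B₂(r,c))) on the index set [n] × [n]. Then the Latin squares 𝒳_{α,β} and 𝒳_{γ,δ} of order n² are orthogonal. -/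
/-- If `C_α ⊥ C_γ` and `C_β ⊥ C_δ`, then the Latin squares `𝒳_{α,β}` and `𝒳_{γ,δ}`
of order `n²` are orthogonal. -/
theorem stmt_10 (n : ℕ) (hn : 1 ≤ n)
    (B₁ B₂ : Fin n → Fin n → Fin n)
    (hB₁ : IsLatinSquare B₁) (hB₂ : IsLatinSquare B₂) (hB : IsOrthogonal B₁ B₂)
    (Cα Cβ Cγ Cδ : Fin n → Fin n → Fin n)
    (hCα : IsLatinSquare Cα) (hCβ : IsLatinSquare Cβ)
    (hCγ : IsLatinSquare Cγ) (hCδ : IsLatinSquare Cδ)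
    (hαγ : IsOrthogonal Cα Cγ) (hβδ : IsOrthogonal Cβ Cδ)
    (Xαβ Xγδ : (Fin n × Fin n) → (Fin n × Fin n) → (Fin n × Fin n))
    (hXαβ : ∀ pr qc, Xαβ pr qc =
      (Cα pr.1 (B₁ pr.2 qc.2), Cβ qc.1 (B₂ pr.2 qc.2)))
    (hXγδ : ∀ pr qc, Xγδ pr qc =
      (Cγ pr.1 (B₁ pr.2 qc.2), Cδ qc.1 (B₂ pr.2 qc.2))) :
    IsOrthogonal Xαβ Xγδ := by
  rw [IsOrthogonal]
  rw [← Finite.injective_iff_bijective]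
  rintro ⟨⟨p, r⟩, q, c⟩ ⟨⟨p', r'⟩, q', c'⟩ h
  simp only [hXαβ, hXγδ, Prod.mk.injEq] at h
  obtain ⟨⟨h1, h2⟩, h3, h4⟩ := h
  have hα : (p, B₁ r c) = (p', B₁ r' c') :=
    hαγ.injective (by simp [h1, h3])
  have hβ : (q, B₂ r c) = (q', B₂ r' c') :=
    hβδ.injective (by simp [h2, h4])
  obtain ⟨hp, hs⟩ := Prod.mk.injEq .. ▸ hα
  obtain ⟨hq, ht⟩ := Prod.mk.injEq .. ▸ hβ
  have hrc : (r, c) = (r', c') := hB.injective (by simp [hs, ht])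
  obtain ⟨hr, hc⟩ := Prod.mk.injEq .. ▸ hrc
  simp [hp, hq, hr, hc]
end

section
/- Let n ≥ 1, let A₁ be a Latin square of order n, let B₁, B₂ be a pair of orthogonal Latin squares of order n, and let C_α, C_β be Latin squares of order n, all indexed by [n] = {0, 1, …, n−1}. Define the arrays ℬ₁((p,r),(q,c)) = (A₁(p,q), B₁(r,c)) and 𝒳_{α,β}((p,r),(q,c)) = (C_α(p, B₁(r,c)), C_β(q, B₂(r,c))) on the index set [n] × [n]. Then the Latin squares ℬ₁ and 𝒳_{α,β} of order n² are orthogonal. -/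
/-- The Latin squares `ℬ₁((p,r),(q,c)) = (A₁(p,q), B₁(r,c))` and
`𝒳_{α,β}((p,r),(q,c)) = (C_α(p,B₁(r,c)), C_β(q,B₂(r,c)))` of order `n²` are orthogonal. -/
theorem stmt_11 (n : ℕ) (hn : 1 ≤ n)
    (A₁ : Fin n → Fin n → Fin n) (hA₁ : IsLatinSquare A₁)
    (B₁ B₂ : Fin n → Fin n → Fin n)
    (hB₁ : IsLatinSquare B₁) (hB₂ : IsLatinSquare B₂) (hB : IsOrthogonal B₁ B₂)
    (Cα Cβ : Fin n → Fin n → Fin n)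
    (hCα : IsLatinSquare Cα) (hCβ : IsLatinSquare Cβ)
    (calB₁ : (Fin n × Fin n) → (Fin n × Fin n) → (Fin n × Fin n))
    (hcalB₁ : ∀ pr qc, calB₁ pr qc = (A₁ pr.1 qc.1, B₁ pr.2 qc.2))
    (Xαβ : (Fin n × Fin n) → (Fin n × Fin n) → (Fin n × Fin n))
    (hXαβ : ∀ pr qc, Xαβ pr qc =
      (Cα pr.1 (B₁ pr.2 qc.2), Cβ qc.1 (B₂ pr.2 qc.2))) :
    IsOrthogonal calB₁ Xαβ := by
  rw [IsOrthogonal]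
  rw [Finite.injective_iff_bijective.symm]
  rintro ⟨⟨p, r⟩, ⟨q, c⟩⟩ ⟨⟨p', r'⟩, ⟨q', c'⟩⟩ h
  simp only [hcalB₁, hXαβ, Prod.mk.injEq] at h
  obtain ⟨⟨hA, hBeq⟩, hCa, hCb⟩ := h
  have hp : p = p' := (hCα.2 (B₁ r' c')).1 (by simpa [hBeq] using hCa)
  subst hp
  have hq : q = q' := (hA₁.1 p).1 hA
  subst hq
  have hB2 : B₂ r c = B₂ r' c' := (hCβ.1 q).1 hCb
  have := hB.1 (a₁ := (r, c)) (a₂ := (r', c')) (by simp [hBeq, hB2])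
  simp only [Prod.mk.injEq] at this
  simp [this.1, this.2]
end

section
/- Let n ≥ 1, let A₂ be a Latin square of order n, let B₁, B₂ be a pair of orthogonal Latin squares of order n, and let C_α, C_β be Latin squares of order n, all indexed by [n] = {0, 1, …, n−1}. Define the arrays ℬ₂((p,r),(q,c)) = (A₂(p,q), B₂(r,c)) and 𝒳_{α,β}((p,r),(q,c)) = (C_α(p, B₁(r,c)), C_β(q, B₂(r,c))) on the index set [n] × [n]. Then the Latin squares ℬ₂ and 𝒳_{α,β} of order n² are orthogonal. -/
/-- The Latin squares `ℬ₂((p,r),(q,c)) = (A₂(p,q), B₂(r,c))` and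
`𝒳_{α,β}((p,r),(q,c)) = (C_α(p,B₁(r,c)), C_β(q,B₂(r,c)))` of order `n²` are orthogonal. -/
theorem stmt_12 (n : ℕ) (hn : 1 ≤ n)
    (A₂ : Fin n → Fin n → Fin n) (hA₂ : IsLatinSquare A₂)
    (B₁ B₂ : Fin n → Fin n → Fin n)
    (hB₁ : IsLatinSquare B₁) (hB₂ : IsLatinSquare B₂) (hB : IsOrthogonal B₁ B₂)
    (Cα Cβ : Fin n → Fin n → Fin n)
    (hCα : IsLatinSquare Cα) (hCβ : IsLatinSquare Cβ)
    (calB₂ : (Fin n × Fin n) → (Fin n × Fin n) → (Fin n × Fin n))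
    (hcalB₂ : ∀ pr qc, calB₂ pr qc = (A₂ pr.1 qc.1, B₂ pr.2 qc.2))
    (Xαβ : (Fin n × Fin n) → (Fin n × Fin n) → (Fin n × Fin n))
    (hXαβ : ∀ pr qc, Xαβ pr qc =
      (Cα pr.1 (B₁ pr.2 qc.2), Cβ qc.1 (B₂ pr.2 qc.2))) :
    IsOrthogonal calB₂ Xαβ := by
  rw [IsOrthogonal, ← Finite.injective_iff_bijective]
  rintro ⟨⟨p, r⟩, ⟨q, c⟩⟩ ⟨⟨p', r'⟩, ⟨q', c'⟩⟩ h
  simp only [hcalB₂, hXαβ, Prod.mk.injEq] at h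
  obtain ⟨⟨hA, hB₂eq⟩, hCαeq, hCβeq⟩ := h
  have hq : q = q' := (hCβ.2 _).1 (by simpa [hB₂eq] using hCβeq)
  subst hq
  have hp : p = p' := (hA₂.2 q).1 hA
  subst hp
  have hB₁eq : B₁ r c = B₁ r' c' := (hCα.1 p).1 hCαeq
  have := hB.1 (a₁ := (r, c)) (a₂ := (r', c')) (by simp [hB₁eq, hB₂eq])
  simp only [Prod.mk.injEq] at this
  simp [this.1, this.2]
end

section
/- Let n ≥ 1 and t ≥ 2. If there exists a set of t mutually orthogonal Latin squares of order n, then there exists a set of t+2 mutually orthogonal Latin squares of order n²; that is, MOLS(n²) ≥ MOLS(n) + 2. -/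
namespace Stmt13Aux

/-- Two functions on a square domain are "orthogonal" if their superposition is a bijection. -/
def Orth {β : Type*} (u v : β × β → β) : Prop :=
  Function.Bijective (fun x => (u x, v x))

lemma orth_of_inj {β : Type*} [Finite β] {u v : β × β → β}
    (h : Function.Injective (fun x => (u x, v x))) : Orth u v :=
  Finite.injective_iff_bijective.mp h

lemma Orth.symm {β : Type*} {u v : β × β → β} (h : Orth u v) : Orth v u := by
  have : (fun x => (v x, u x)) = (Prod.swap ∘ fun x => (u x, v x)) := rfl
  rw [Orth, this]
  exact (Equiv.prodComm β β).bijective.comp h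

lemma latin_extract {β : Type*} [Finite β] {g₀ g₁ h : β × β → β}
    (h01 : Orth g₀ g₁) (h0 : Orth g₀ h) (h1 : Orth g₁ h) :
    IsLatinSquare (fun r c => h ((Equiv.ofBijective _ h01).symm (r, c))) := by
  set e := Equiv.ofBijective _ h01 with he
  have key0 : ∀ (p : β × β), g₀ (e.symm p) = p.1 := fun p =>
    congrArg Prod.fst (e.apply_symm_apply p)
  have key1 : ∀ (p : β × β), g₁ (e.symm p) = p.2 := fun p =>
    congrArg Prod.snd (e.apply_symm_apply p)
  constructor
  · intro r
    rw [← Finite.injective_iff_bijective]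
    intro c c' hcc
    have hx : e.symm (r, c) = e.symm (r, c') := by
      apply h0.injective
      simp only [Prod.mk.injEq]
      exact ⟨by rw [key0, key0], hcc⟩
    have := congrArg e hx
    simp only [Equiv.apply_symm_apply] at this
    exact (Prod.mk.injEq _ _ _ _ ▸ this).2
  · intro c
    rw [← Finite.injective_iff_bijective]
    intro r r' hrr
    have hx : e.symm (r, c) = e.symm (r', c) := by
      apply h1.injective
      simp only [Prod.mk.injEq]
      exact ⟨by rw [key1, key1], hrr⟩
    have := congrArg e hx
    simp only [Equiv.apply_symm_apply] at this
    exact (Prod.mk.injEq _ _ _ _ ▸ this).1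

lemma orth_extract {β : Type*} [Finite β] {g₀ g₁ h₁ h₂ : β × β → β}
    (h01 : Orth g₀ g₁) (h12 : Orth h₁ h₂) :
    IsOrthogonal (fun r c => h₁ ((Equiv.ofBijective _ h01).symm (r, c)))
      (fun r c => h₂ ((Equiv.ofBijective _ h01).symm (r, c))) := by
  have : (fun rc : β × β =>
      (h₁ ((Equiv.ofBijective _ h01).symm (rc.1, rc.2)),
       h₂ ((Equiv.ofBijective _ h01).symm (rc.1, rc.2)))) =
      (fun x => (h₁ x, h₂ x)) ∘ (Equiv.ofBijective _ h01).symm := rfl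
  rw [IsOrthogonal, this]
  exact h12.comp (Equiv.ofBijective _ h01).symm.bijective

lemma latin_map {β γ : Type*} (e : β ≃ γ) {L : β → β → β} (h : IsLatinSquare L) :
    IsLatinSquare (fun r c => e (L (e.symm r) (e.symm c))) := by
  constructor
  · intro r
    exact (e.bijective.comp (h.1 (e.symm r))).comp e.symm.bijective
  · intro c
    exact (e.bijective.comp (h.2 (e.symm c))).comp e.symm.bijective

lemma orth_map {β γ : Type*} (e : β ≃ γ) {L₁ L₂ : β → β → β} (h : IsOrthogonal L₁ L₂) :
    IsOrthogonal (fun r c => e (L₁ (e.symm r) (e.symm c)))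
      (fun r c => e (L₂ (e.symm r) (e.symm c))) := by
  have : (fun rc : γ × γ => (e (L₁ (e.symm rc.1) (e.symm rc.2)), e (L₂ (e.symm rc.1) (e.symm rc.2)))) =
      (Prod.map e e) ∘ (fun rc : β × β => (L₁ rc.1 rc.2, L₂ rc.1 rc.2)) ∘ (Prod.map e.symm e.symm) := rfl
  rw [IsOrthogonal, this]
  exact ((Equiv.prodCongr e e).bijective.comp h).comp (Equiv.prodCongr e.symm e.symm).bijective

section Concrete

variable {n t : ℕ} (C : Fin t → Fin n → Fin n → Fin n)

/-- straight product square -/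
def Sq (k : Fin t) : (Fin n × Fin n) × (Fin n × Fin n) → Fin n × Fin n :=
  fun x => (C k x.1.1 x.2.1, C k x.1.2 x.2.2)

/-- crossed: (r₁, C a (r₂, c₁)) -/
def Ta (a : Fin t) : (Fin n × Fin n) × (Fin n × Fin n) → Fin n × Fin n :=
  fun x => (x.1.1, C a x.1.2 x.2.1)

/-- crossed: (c₂, C a (r₂, c₁)) -/
def Tb (a : Fin t) : (Fin n × Fin n) × (Fin n × Fin n) → Fin n × Fin n :=
  fun x => (x.2.2, C a x.1.2 x.2.1)

/-- crossed: (C a (r₁, c₂), r₂) -/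
def Tc (a : Fin t) : (Fin n × Fin n) × (Fin n × Fin n) → Fin n × Fin n :=
  fun x => (C a x.1.1 x.2.2, x.1.2)

/-- crossed: (C a (r₁, c₂), c₁) -/
def Td (a : Fin t) : (Fin n × Fin n) × (Fin n × Fin n) → Fin n × Fin n :=
  fun x => (C a x.1.1 x.2.2, x.2.1)

variable (hC : ∀ k, IsLatinSquare (C k))
  (hCorth : ∀ k l, k ≠ l → IsOrthogonal (C k) (C l))

include hC hCorth

lemma pairInj {k l : Fin t} (hkl : k ≠ l) {r c r' c' : Fin n}
    (h1 : C k r c = C k r' c') (h2 : C l r c = C l r' c') : r = r' ∧ c = c' := by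
  have := (hCorth k l hkl).injective
    (a₁ := (r, c)) (a₂ := (r', c')) (by simp only [Prod.mk.injEq]; exact ⟨h1, h2⟩)
  simpa [Prod.ext_iff] using this

omit hCorth

lemma rowInj (k : Fin t) {r c c' : Fin n} (h : C k r c = C k r c') : c = c' :=
  ((hC k).1 r).injective h

lemma colInj (k : Fin t) {r r' c : Fin n} (h : C k r c = C k r' c) : r = r' :=
  ((hC k).2 c).injective h

include hCorth

lemma orth_Sq_Sq [Finite (Fin n)] {k l : Fin t} (hkl : k ≠ l) :
    Orth (Sq C k) (Sq C l) := by
  apply orth_of_inj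
  rintro ⟨⟨r1, r2⟩, ⟨c1, c2⟩⟩ ⟨⟨s1, s2⟩, ⟨d1, d2⟩⟩ hx
  simp only [Sq, Prod.mk.injEq] at hx
  obtain ⟨⟨h1, h2⟩, h3, h4⟩ := hx
  obtain ⟨rfl, rfl⟩ := pairInj C hC hCorth hkl h1 h3
  obtain ⟨rfl, rfl⟩ := pairInj C hC hCorth hkl h2 h4
  rfl

lemma orth_Ta_Tb [Finite (Fin n)] {a b : Fin t} (hab : a ≠ b) :
    Orth (Ta C a) (Tb C b) := by
  apply orth_of_inj
  rintro ⟨⟨r1, r2⟩, ⟨c1, c2⟩⟩ ⟨⟨s1, s2⟩, ⟨d1, d2⟩⟩ hx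
  simp only [Ta, Tb, Prod.mk.injEq] at hx
  obtain ⟨⟨rfl, h2⟩, rfl, h4⟩ := hx
  obtain ⟨rfl, rfl⟩ := pairInj C hC hCorth hab h2 h4
  rfl

lemma orth_Tc_Td [Finite (Fin n)] {a b : Fin t} (hab : a ≠ b) :
    Orth (Tc C a) (Td C b) := by
  apply orth_of_inj
  rintro ⟨⟨r1, r2⟩, ⟨c1, c2⟩⟩ ⟨⟨s1, s2⟩, ⟨d1, d2⟩⟩ hx
  simp only [Tc, Td, Prod.mk.injEq] at hx
  obtain ⟨⟨h1, rfl⟩, h3, rfl⟩ := hx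
  obtain ⟨rfl, rfl⟩ := pairInj C hC hCorth hab h1 h3
  rfl

omit hCorth

lemma orth_Ta_Tc [Finite (Fin n)] (a : Fin t) :
    Orth (Ta C a) (Tc C a) := by
  apply orth_of_inj
  rintro ⟨⟨r1, r2⟩, ⟨c1, c2⟩⟩ ⟨⟨s1, s2⟩, ⟨d1, d2⟩⟩ hx
  simp only [Ta, Tc, Prod.mk.injEq] at hx
  obtain ⟨⟨rfl, h2⟩, h3, rfl⟩ := hx
  obtain rfl := rowInj C hC a h3
  obtain rfl := rowInj C hC a h2
  rfl

lemma orth_Ta_Td [Finite (Fin n)] (a b : Fin t) :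
    Orth (Ta C a) (Td C b) := by
  apply orth_of_inj
  rintro ⟨⟨r1, r2⟩, ⟨c1, c2⟩⟩ ⟨⟨s1, s2⟩, ⟨d1, d2⟩⟩ hx
  simp only [Ta, Td, Prod.mk.injEq] at hx
  obtain ⟨⟨rfl, h2⟩, h3, rfl⟩ := hx
  obtain rfl := rowInj C hC b h3
  obtain rfl := colInj C hC a h2
  rfl

lemma orth_Tb_Tc [Finite (Fin n)] (a b : Fin t) :
    Orth (Tb C a) (Tc C b) := by
  apply orth_of_inj
  rintro ⟨⟨r1, r2⟩, ⟨c1, c2⟩⟩ ⟨⟨s1, s2⟩, ⟨d1, d2⟩⟩ hx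
  simp only [Tb, Tc, Prod.mk.injEq] at hx
  obtain ⟨⟨rfl, h2⟩, h3, rfl⟩ := hx
  obtain rfl := rowInj C hC a h2
  obtain rfl := colInj C hC b h3
  rfl

lemma orth_Tb_Td [Finite (Fin n)] (a b : Fin t) :
    Orth (Tb C a) (Td C b) := by
  apply orth_of_inj
  rintro ⟨⟨r1, r2⟩, ⟨c1, c2⟩⟩ ⟨⟨s1, s2⟩, ⟨d1, d2⟩⟩ hx
  simp only [Tb, Td, Prod.mk.injEq] at hx
  obtain ⟨⟨rfl, h2⟩, h3, rfl⟩ := hx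
  obtain rfl := colInj C hC a h2
  obtain rfl := colInj C hC b h3
  rfl

lemma orth_Ta_Sq [Finite (Fin n)] (a k : Fin t) :
    Orth (Ta C a) (Sq C k) := by
  apply orth_of_inj
  rintro ⟨⟨r1, r2⟩, ⟨c1, c2⟩⟩ ⟨⟨s1, s2⟩, ⟨d1, d2⟩⟩ hx
  simp only [Ta, Sq, Prod.mk.injEq] at hx
  obtain ⟨⟨rfl, h2⟩, h3, h4⟩ := hx
  obtain rfl := rowInj C hC k h3
  obtain rfl := colInj C hC a h2
  obtain rfl := rowInj C hC k h4
  rfl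

lemma orth_Tb_Sq [Finite (Fin n)] (a k : Fin t) :
    Orth (Tb C a) (Sq C k) := by
  apply orth_of_inj
  rintro ⟨⟨r1, r2⟩, ⟨c1, c2⟩⟩ ⟨⟨s1, s2⟩, ⟨d1, d2⟩⟩ hx
  simp only [Tb, Sq, Prod.mk.injEq] at hx
  obtain ⟨⟨rfl, h2⟩, h3, h4⟩ := hx
  obtain rfl := colInj C hC k h4
  obtain rfl := rowInj C hC a h2
  obtain rfl := colInj C hC k h3
  rfl

lemma orth_Tc_Sq [Finite (Fin n)] (a k : Fin t) :
    Orth (Tc C a) (Sq C k) := by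
  apply orth_of_inj
  rintro ⟨⟨r1, r2⟩, ⟨c1, c2⟩⟩ ⟨⟨s1, s2⟩, ⟨d1, d2⟩⟩ hx
  simp only [Tc, Sq, Prod.mk.injEq] at hx
  obtain ⟨⟨h1, rfl⟩, h3, h4⟩ := hx
  obtain rfl := rowInj C hC k h4
  obtain rfl := colInj C hC a h1
  obtain rfl := rowInj C hC k h3
  rfl

lemma orth_Td_Sq [Finite (Fin n)] (a k : Fin t) :
    Orth (Td C a) (Sq C k) := by
  apply orth_of_inj
  rintro ⟨⟨r1, r2⟩, ⟨c1, c2⟩⟩ ⟨⟨s1, s2⟩, ⟨d1, d2⟩⟩ hx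
  simp only [Td, Sq, Prod.mk.injEq] at hx
  obtain ⟨⟨h1, rfl⟩, h3, h4⟩ := hx
  obtain rfl := colInj C hC k h3
  obtain rfl := rowInj C hC a h1
  obtain rfl := colInj C hC k h4
  rfl

end Concrete

end Stmt13Aux



open Stmt13Aux in
/-- If there exist `t ≥ 2` MOLS of order `n`, then there exist `t+2` MOLS of order `n²`;
that is, MOLS(n²) ≥ MOLS(n) + 2. -/
theorem stmt_13 (n t : ℕ) (hn : 1 ≤ n) (ht : 2 ≤ t)
    (C : Fin t → Fin n → Fin n → Fin n)
    (hC : ∀ k, IsLatinSquare (C k))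
    (hCorth : ∀ k l, k ≠ l → IsOrthogonal (C k) (C l)) :
    ∃ D : Fin (t + 2) → Fin (n ^ 2) → Fin (n ^ 2) → Fin (n ^ 2),
      (∀ k, IsLatinSquare (D k)) ∧
      (∀ k l, k ≠ l → IsOrthogonal (D k) (D l)) := by
  classical
  set i0 : Fin t := ⟨0, by omega⟩ with hi0
  set i1 : Fin t := ⟨1, by omega⟩ with hi1
  have hne : i0 ≠ i1 := by simp [hi0, hi1, Fin.ext_iff]
  -- the two coordinate functions
  set g₀ : (Fin n × Fin n) × (Fin n × Fin n) → Fin n × Fin n := Ta C i0 with hg0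
  set g₁ : (Fin n × Fin n) × (Fin n × Fin n) → Fin n × Fin n := Tb C i1 with hg1
  have h01 : Orth g₀ g₁ := orth_Ta_Tb C hC hCorth hne
  -- the family of t+2 further functions
  set M : Fin (t + 2) → ((Fin n × Fin n) × (Fin n × Fin n) → Fin n × Fin n) :=
    fun k => if h : (k : ℕ) < t then Sq C ⟨k, h⟩
      else if (k : ℕ) = t then Tc C i0 else Td C i1 with hM
  have hM0 : ∀ k, Orth g₀ (M k) := by
    intro k
    rw [hM]
    by_cases h : (k : ℕ) < t
    · simpa [h] using orth_Ta_Sq C hC i0 ⟨k, h⟩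
    · by_cases h' : (k : ℕ) = t
      · simpa [h, h'] using orth_Ta_Tc C hC i0
      · simpa [h, h'] using orth_Ta_Td C hC i0 i1
  have hM1 : ∀ k, Orth g₁ (M k) := by
    intro k
    rw [hM]
    by_cases h : (k : ℕ) < t
    · simpa [h] using orth_Tb_Sq C hC i1 ⟨k, h⟩
    · by_cases h' : (k : ℕ) = t
      · simpa [h, h'] using orth_Tb_Tc C hC i1 i0
      · simpa [h, h'] using orth_Tb_Td C hC i1 i1
  have hMM : ∀ k l, k ≠ l → Orth (M k) (M l) := by
    intro k l hkl
    rw [hM]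
    have hval : (k : ℕ) ≠ (l : ℕ) := fun h => hkl (Fin.ext h)
    by_cases h : (k : ℕ) < t <;> by_cases h' : (l : ℕ) < t
    · simp only [h, h', dif_pos]
      exact orth_Sq_Sq C hC hCorth (by simp [Fin.ext_iff, hval])
    · simp only [h, h', dif_pos, dif_neg, not_false_iff]
      by_cases h'' : (l : ℕ) = t
      · simpa [h''] using (orth_Tc_Sq C hC i0 ⟨k, h⟩).symm
      · simpa [h''] using (orth_Td_Sq C hC i1 ⟨k, h⟩).symm
    · simp only [h, h', dif_pos, dif_neg, not_false_iff]
      by_cases h'' : (k : ℕ) = t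
      · simpa [h''] using orth_Tc_Sq C hC i0 ⟨l, h'⟩
      · simpa [h''] using orth_Td_Sq C hC i1 ⟨l, h'⟩
    · -- both ≥ t : one is t, other is t+1
      have hk2 : (k : ℕ) < t + 2 := k.isLt
      have hl2 : (l : ℕ) < t + 2 := l.isLt
      simp only [h, h', dif_neg, not_false_iff]
      by_cases h'' : (k : ℕ) = t
      · have hl'' : (l : ℕ) ≠ t := by omega
        simpa [h'', hl''] using orth_Tc_Td C hC hCorth hne
      · have hl'' : (l : ℕ) = t := by omega
        simpa [h'', hl''] using (orth_Tc_Td C hC hCorth hne).symm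
  -- the t+2 MOLS of order n*n on symbol set Fin n × Fin n
  set D0 : Fin (t + 2) → (Fin n × Fin n) → (Fin n × Fin n) → (Fin n × Fin n) :=
    fun k r c => M k ((Equiv.ofBijective _ h01).symm (r, c)) with hD0
  have hD0L : ∀ k, IsLatinSquare (D0 k) := fun k => latin_extract h01 (hM0 k) (hM1 k)
  have hD0O : ∀ k l, k ≠ l → IsOrthogonal (D0 k) (D0 l) :=
    fun k l hkl => orth_extract h01 (hMM k l hkl)
  -- transport along Fin n × Fin n ≃ Fin (n ^ 2)
  set π : Fin n × Fin n ≃ Fin (n ^ 2) := finProdFinEquiv.trans (finCongr (pow_two n).symm)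
    with hπ
  exact ⟨fun k r c => π (D0 k (π.symm r) (π.symm c)),
    fun k => latin_map π (hD0L k),
    fun k l hkl => orth_map π (hD0O k l hkl)⟩
end
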